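/- (Kronecker product rule for matrix derivatives.) Let F : ℝ^{n_x} → M_{s×t}(ℝ) and H : ℝ^{n_x} → M_{p×q}(ℝ) be differentiable at x ∈ ℝ^{n_x}. Then ∂(F ⊗ H)/∂x'(x) = F(x) ⊗ (∂H/∂x')(x) + ( (∂F/∂x')(x) ⊗ H(x) ) · ( I_t ⊗ K_{n_x,q} ), after canonical identification of the product index sets, where I_t is the t × t identity matrix. -/
import Mathlib


open Kronecker Matrix

noncomputable section

/-- The derivative matrix `∂F/∂x'` of a matrix-valued map: entry in row `i`
and column `(j, k)` is `∂F_{ij}/∂x_k`. -/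
def matDeriv {nx : ℕ} {α β : Type*} (F : (Fin nx → ℝ) → Matrix α β ℝ) (x : Fin nx → ℝ) :
    Matrix α (β × Fin nx) ℝ :=
  Matrix.of fun i jk => fderiv ℝ (fun y => F y i jk.1) x (Pi.single jk.2 1)

/-- Elementary matrix with a single `1` at position `(i, j)`. -/
def elemM {α β : Type*} [DecidableEq α] [DecidableEq β] (i : α) (j : β) :
    Matrix α β ℝ :=
  Matrix.of fun a b => if a = i ∧ b = j then 1 else 0

/-- The commutation matrix `K_{α,β} = ∑_{i,j} E^{i,j} ⊗ E^{j,i}`, characterized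
by `K_{α,β} (x ⊗ y) = y ⊗ x`. -/
def commM (α β : Type*) [Fintype α] [Fintype β] [DecidableEq α] [DecidableEq β] :
    Matrix (α × β) (β × α) ℝ :=
  ∑ i : α, ∑ j : β, elemM i j ⊗ₖ elemM j i

lemma commM_apply {α β : Type*} [Fintype α] [Fintype β] [DecidableEq α] [DecidableEq β]
    (a : α) (b : β) (c : β) (d : α) :
    commM α β (a, b) (c, d) = if a = d ∧ b = c then 1 else 0 := by
  simp only [commM, Matrix.sum_apply, Matrix.kroneckerMap_apply, elemM, Matrix.of_apply]
  simp [Finset.sum_ite_eq, ite_and, mul_ite, and_comm]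
  aesop

/-- Kronecker product rule for matrix derivatives:
`∂(F ⊗ H)/∂x' = F ⊗ (∂H/∂x') + ((∂F/∂x') ⊗ H)(I_t ⊗ K_{n_x,q})`,
after the canonical identification of the product index sets. -/
theorem matDeriv_kronecker {nx s t p q : ℕ}
    (F : (Fin nx → ℝ) → Matrix (Fin s) (Fin t) ℝ)
    (H : (Fin nx → ℝ) → Matrix (Fin p) (Fin q) ℝ)
    (x : Fin nx → ℝ)
    (hF : ∀ i j, DifferentiableAt ℝ (fun y => F y i j) x)
    (hH : ∀ i j, DifferentiableAt ℝ (fun y => H y i j) x) :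
    matDeriv (fun y => F y ⊗ₖ H y) x =
      (F x ⊗ₖ matDeriv H x).submatrix id
          (fun c : (Fin t × Fin q) × Fin nx => (c.1.1, (c.1.2, c.2))) +
        (matDeriv F x ⊗ₖ H x) *
          ((1 : Matrix (Fin t) (Fin t) ℝ) ⊗ₖ commM (Fin nx) (Fin q)).submatrix
            (fun r : (Fin t × Fin nx) × Fin q => (r.1.1, (r.1.2, r.2)))
            (fun c : (Fin t × Fin q) × Fin nx => (c.1.1, (c.1.2, c.2))) := by
  ext ⟨i, k⟩ ⟨⟨j1, j2⟩, m⟩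
  have hmul : fderiv ℝ (fun y => F y i j1 * H y k j2) x =
      F x i j1 • fderiv ℝ (fun y => H y k j2) x +
        H x k j2 • fderiv ℝ (fun y => F y i j1) x := fderiv_mul (hF i j1) (hH k j2)
  simp only [matDeriv, Matrix.add_apply, Matrix.submatrix_apply, Matrix.kroneckerMap_apply,
    Matrix.mul_apply, Matrix.of_apply, id_eq]
  rw [hmul]
  simp only [ContinuousLinearMap.add_apply, ContinuousLinearMap.smul_apply, smul_eq_mul]
  congr 1
  rw [Fintype.sum_prod_type]
  simp [Fintype.sum_prod_type, commM_apply, Matrix.one_apply, mul_ite, ite_and,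
    Finset.sum_ite_eq, Finset.sum_ite_eq', mul_comm]

end
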